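/- Let γ : ℝ → ℝ³ be of class C³, parametrized by arc length, with curvature κ(s) = ‖γ''(s)‖ > 0 for all s, torsion τ, and tube map p(ρ, s, θ) = γ(s) + ρ cos θ n(s) + ρ sin θ b(s). Fix r > 0, s and θ. Then as (η₁, η₂) → (0, 0), ‖p(r, s + η₁, θ + η₂) − p(r, s, θ)‖² = η₁² (1 − r κ(s) cos θ)² + r² (η₂ + η₁ τ(s))² + o(η₁² + η₂²). -/

import Mathlib

open Real Asymptotics

/-- Cross product of two vectors of Euclidean 3-space. -/
noncomputable def cross3 (x y : EuclideanSpace ℝ (Fin 3)) : EuclideanSpace ℝ (Fin 3) :=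
  (WithLp.equiv 2 (Fin 3 → ℝ)).symm
    ![x 1 * y 2 - x 2 * y 1, x 2 * y 0 - x 0 * y 2, x 0 * y 1 - x 1 * y 0]

lemma cross3_apply (x y : EuclideanSpace ℝ (Fin 3)) (i : Fin 3) :
    cross3 x y i = ![x 1 * y 2 - x 2 * y 1, x 2 * y 0 - x 0 * y 2, x 0 * y 1 - x 1 * y 0] i := rfl

lemma inner3 (x y : EuclideanSpace ℝ (Fin 3)) :
    (inner ℝ x y : ℝ) = x 0 * y 0 + x 1 * y 1 + x 2 * y 2 := by
  simp [PiLp.inner_apply, Fin.sum_univ_three, mul_comm]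

lemma inner_cross3_left (x y : EuclideanSpace ℝ (Fin 3)) : (inner ℝ (cross3 x y) x : ℝ) = 0 := by
  simp [inner3, cross3_apply, PiLp.inner_apply, Fin.sum_univ_three]; ring

lemma inner_cross3_right (x y : EuclideanSpace ℝ (Fin 3)) : (inner ℝ (cross3 x y) y : ℝ) = 0 := by
  simp [inner3, cross3_apply, PiLp.inner_apply, Fin.sum_univ_three]; ring

lemma inner_cross3_self (x y : EuclideanSpace ℝ (Fin 3)) :
    (inner ℝ (cross3 x y) (cross3 x y) : ℝ)
      = (inner ℝ x x : ℝ) * (inner ℝ y y : ℝ) - (inner ℝ x y : ℝ) ^ 2 := by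
  rw [inner3, inner3, inner3, inner3]; simp [cross3_apply]; ring

lemma cross3_smul_right (c : ℝ) (x y : EuclideanSpace ℝ (Fin 3)) :
    cross3 x (c • y) = c • cross3 x y := by
  ext i; fin_cases i <;> simp [cross3_apply] <;> ring

lemma isBoundedBilinearMap_cross3 :
    IsBoundedBilinearMap ℝ (fun p : EuclideanSpace ℝ (Fin 3) × EuclideanSpace ℝ (Fin 3) =>
      cross3 p.1 p.2) := by
  refine ⟨fun x₁ x₂ y => ?_, fun c x y => ?_, fun x y₁ y₂ => ?_, fun c x y => ?_,
    ⟨1, zero_lt_one, fun x y => ?_⟩⟩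
  · ext i; fin_cases i <;> simp [cross3_apply] <;> ring
  · ext i; fin_cases i <;> simp [cross3_apply] <;> ring
  · ext i; fin_cases i <;> simp [cross3_apply] <;> ring
  · ext i; fin_cases i <;> simp [cross3_apply] <;> ring
  · have h : ‖cross3 x y‖ ^ 2 ≤ (‖x‖ * ‖y‖) ^ 2 := by
      have := inner_cross3_self x y
      rw [real_inner_self_eq_norm_sq, real_inner_self_eq_norm_sq,
        real_inner_self_eq_norm_sq] at this
      nlinarith [sq_nonneg (inner ℝ x y : ℝ)]
    calc ‖cross3 x y‖ = √(‖cross3 x y‖ ^ 2) := (Real.sqrt_sq (norm_nonneg _)).symm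
      _ ≤ √((‖x‖ * ‖y‖) ^ 2) := Real.sqrt_le_sqrt h
      _ = ‖x‖ * ‖y‖ := Real.sqrt_sq (by positivity)
      _ = 1 * ‖x‖ * ‖y‖ := by ring

lemma HasDerivAt.cross3' {f g : ℝ → EuclideanSpace ℝ (Fin 3)} {f' g' : EuclideanSpace ℝ (Fin 3)}
    {x : ℝ} (hf : HasDerivAt f f' x) (hg : HasDerivAt g g' x) :
    HasDerivAt (fun u => cross3 (f u) (g u)) (cross3 (f x) g' + cross3 f' (g x)) x := by
  have h := (isBoundedBilinearMap_cross3.hasFDerivAt (f x, g x)).comp_hasDerivAt x (hf.prodMk hg)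
  simp at h; exact h

lemma expand3 (t n v : EuclideanSpace ℝ (Fin 3)) (ht : (inner ℝ t t : ℝ) = 1)
    (hn : (inner ℝ n n : ℝ) = 1) (htn : (inner ℝ t n : ℝ) = 0) :
    (inner ℝ v t : ℝ) • t + (inner ℝ v n : ℝ) • n + (inner ℝ v (cross3 t n) : ℝ) • cross3 t n = v := by
  rw [inner3] at ht hn htn
  rw [inner3, inner3, inner3]
  ext i
  fin_cases i
  · simp [cross3_apply]
    linear_combination (v 0*(n 0*n 0+n 1*n 1+n 2*n 2) - (v 0*n 0+v 1*n 1+v 2*n 2)*n 0)*ht + (v 0 - (v 0*t 0+v 1*t 1+v 2*t 2)*t 0)*hn + ((v 0*n 0+v 1*n 1+v 2*n 2)*t 0 + (v 0*t 0+v 1*t 1+v 2*t 2)*n 0 - (t 0*n 0+t 1*n 1+t 2*n 2)*v 0)*htn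
  · simp [cross3_apply]
    linear_combination (v 1*(n 0*n 0+n 1*n 1+n 2*n 2) - (v 0*n 0+v 1*n 1+v 2*n 2)*n 1)*ht + (v 1 - (v 0*t 0+v 1*t 1+v 2*t 2)*t 1)*hn + ((v 0*n 0+v 1*n 1+v 2*n 2)*t 1 + (v 0*t 0+v 1*t 1+v 2*t 2)*n 1 - (t 0*n 0+t 1*n 1+t 2*n 2)*v 1)*htn
  · simp [cross3_apply]
    linear_combination (v 2*(n 0*n 0+n 1*n 1+n 2*n 2) - (v 0*n 0+v 1*n 1+v 2*n 2)*n 2)*ht + (v 2 - (v 0*t 0+v 1*t 1+v 2*t 2)*t 2)*hn + ((v 0*n 0+v 1*n 1+v 2*n 2)*t 2 + (v 0*t 0+v 1*t 1+v 2*t 2)*n 2 - (t 0*n 0+t 1*n 1+t 2*n 2)*v 2)*htn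

lemma normsq3 (t n b : EuclideanSpace ℝ (Fin 3)) (a c d : ℝ) (ht : (inner ℝ t t : ℝ) = 1)
    (hn : (inner ℝ n n : ℝ) = 1) (hb : (inner ℝ b b : ℝ) = 1) (htn : (inner ℝ t n : ℝ) = 0)
    (htb : (inner ℝ t b : ℝ) = 0) (hnb : (inner ℝ n b : ℝ) = 0) :
    ‖a • t + c • n + d • b‖ ^ 2 = a ^ 2 + c ^ 2 + d ^ 2 := by
  rw [← real_inner_self_eq_norm_sq]
  have hnt : (inner ℝ n t : ℝ) = 0 := by rw [real_inner_comm]; exact htn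
  have hbt : (inner ℝ b t : ℝ) = 0 := by rw [real_inner_comm]; exact htb
  have hbn : (inner ℝ b n : ℝ) = 0 := by rw [real_inner_comm]; exact hnb
  simp only [inner_add_left, inner_add_right, real_inner_smul_left, real_inner_smul_right,
    ht, hn, hb, htn, htb, hnb, hnt, hbt, hbn]
  ring


/-- Curvature of an arc-length parametrized curve. -/
noncomputable def curv (γ : ℝ → EuclideanSpace ℝ (Fin 3)) (s : ℝ) : ℝ :=
  ‖deriv (deriv γ) s‖

/-- Unit tangent. -/
noncomputable def tang (γ : ℝ → EuclideanSpace ℝ (Fin 3)) (s : ℝ) : EuclideanSpace ℝ (Fin 3) :=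
  deriv γ s

/-- Principal normal. -/
noncomputable def nrml (γ : ℝ → EuclideanSpace ℝ (Fin 3)) (s : ℝ) : EuclideanSpace ℝ (Fin 3) :=
  (curv γ s)⁻¹ • deriv (deriv γ) s

/-- Binormal. -/
noncomputable def binrml (γ : ℝ → EuclideanSpace ℝ (Fin 3)) (s : ℝ) : EuclideanSpace ℝ (Fin 3) :=
  cross3 (tang γ s) (nrml γ s)

/-- Torsion of an arc-length parametrized curve. -/
noncomputable def tors (γ : ℝ → EuclideanSpace ℝ (Fin 3)) (s : ℝ) : ℝ :=
  (inner ℝ (cross3 (deriv γ s) (deriv (deriv γ) s)) (deriv (deriv (deriv γ)) s) : ℝ) /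
    (curv γ s) ^ 2

/-- The tube map `p(ρ, s, θ) = γ(s) + ρ cos θ n(s) + ρ sin θ b(s)`. -/
noncomputable def tubeMap (γ : ℝ → EuclideanSpace ℝ (Fin 3)) (ρ s θ : ℝ) :
    EuclideanSpace ℝ (Fin 3) :=
  γ s + (ρ * Real.cos θ) • nrml γ s + (ρ * Real.sin θ) • binrml γ s

set_option maxHeartbeats 1000000 in
/-- second-order expansion of the squared Euclidean distance between
nearby boundary points of the tube:
`‖p(r, s+η₁, θ+η₂) − p(r, s, θ)‖² = η₁²(1 − r κ(s) cos θ)² + r²(η₂ + η₁ τ(s))² + o(η₁² + η₂²)`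
as `(η₁, η₂) → (0, 0)`. -/
theorem tube_dist_sq_expansion (γ : ℝ → EuclideanSpace ℝ (Fin 3))
    (hγ : ContDiff ℝ 3 γ) (harc : ∀ s, ‖deriv γ s‖ = 1)
    (hκ : ∀ s, 0 < curv γ s) (r : ℝ) (hr : 0 < r) (s θ : ℝ) :
    (fun η : ℝ × ℝ =>
        ‖tubeMap γ r (s + η.1) (θ + η.2) - tubeMap γ r s θ‖ ^ 2 -
          (η.1 ^ 2 * (1 - r * curv γ s * Real.cos θ) ^ 2 +
            r ^ 2 * (η.2 + η.1 * tors γ s) ^ 2)) =o[nhds (0 : ℝ × ℝ)]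
      fun η : ℝ × ℝ => η.1 ^ 2 + η.2 ^ 2 := by
  -- differentiability chain
  rw [show (3 : WithTop ℕ∞) = 2 + 1 by norm_num, contDiff_succ_iff_deriv] at hγ
  obtain ⟨hγdiff, -, hγ2⟩ := hγ
  rw [show (2 : WithTop ℕ∞) = 1 + 1 by norm_num, contDiff_succ_iff_deriv] at hγ2
  obtain ⟨hTdiff, -, hγ1⟩ := hγ2
  have hAdiff : Differentiable ℝ (deriv (deriv γ)) := hγ1.differentiable (by norm_num)
  have hκ0 : ∀ u, curv γ u ≠ 0 := fun u => ne_of_gt (hκ u)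
  -- global inner product facts
  have hTT : ∀ u, (inner ℝ (deriv γ u) (deriv γ u) : ℝ) = 1 := fun u => by
    rw [real_inner_self_eq_norm_sq, harc u]; norm_num
  have hAA : ∀ u, (inner ℝ (deriv (deriv γ) u) (deriv (deriv γ) u) : ℝ) = (curv γ u) ^ 2 :=
    fun u => real_inner_self_eq_norm_sq _
  have hTA : ∀ u, (inner ℝ (deriv γ u) (deriv (deriv γ) u) : ℝ) = 0 := by
    intro u
    have h := HasDerivAt.inner ℝ (hTdiff u).hasDerivAt (hTdiff u).hasDerivAt
    simp only [hTT] at h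
    have h3 := h.unique (hasDerivAt_const u 1)
    have h4 : (inner ℝ (deriv (deriv γ) u) (deriv γ u) : ℝ)
        = inner ℝ (deriv γ u) (deriv (deriv γ) u) := real_inner_comm _ _
    linarith
  have hnrml_eq : nrml γ = fun v => (curv γ v)⁻¹ • deriv (deriv γ) v := rfl
  have hTN : ∀ u, (inner ℝ (deriv γ u) (nrml γ u) : ℝ) = 0 := fun u => by
    rw [hnrml_eq]
    simp only [real_inner_smul_right, hTA u, mul_zero]
  have hNN : ∀ u, (inner ℝ (nrml γ u) (nrml γ u) : ℝ) = 1 := fun u => by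
    rw [hnrml_eq]
    simp only [real_inner_smul_right, real_inner_smul_left, hAA u]
    field_simp [hκ0 u]
  have hbinrml_eq : binrml γ = fun v => cross3 (deriv γ v) (nrml γ v) := rfl
  have hBT : ∀ u, (inner ℝ (binrml γ u) (deriv γ u) : ℝ) = 0 := fun u => by
    rw [hbinrml_eq]; exact inner_cross3_left _ _
  have hBN : ∀ u, (inner ℝ (binrml γ u) (nrml γ u) : ℝ) = 0 := fun u => by
    rw [hbinrml_eq]; exact inner_cross3_right _ _
  have hBB : ∀ u, (inner ℝ (binrml γ u) (binrml γ u) : ℝ) = 1 := fun u => by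
    rw [hbinrml_eq]
    simp only [inner_cross3_self, hTT u, hNN u, hTN u]
    norm_num
  have hTB : ∀ u, (inner ℝ (deriv γ u) (binrml γ u) : ℝ) = 0 := fun u => by
    rw [real_inner_comm]; exact hBT u
  have hNB : ∀ u, (inner ℝ (nrml γ u) (binrml γ u) : ℝ) = 0 := fun u => by
    rw [real_inner_comm]; exact hBN u
  have hNT : ∀ u, (inner ℝ (nrml γ u) (deriv γ u) : ℝ) = 0 := fun u => by
    rw [real_inner_comm]; exact hTN u
  -- differentiability of the frame
  have hA0 : ∀ u, deriv (deriv γ) u ≠ 0 := by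
    intro u h
    exact hκ0 u (by rw [curv, h, norm_zero])
  have hκd : ∀ u, DifferentiableAt ℝ (curv γ) u := fun u => (hAdiff u).norm ℝ (hA0 u)
  have hκinv : ∀ u, DifferentiableAt ℝ (fun v => (curv γ v)⁻¹) u := fun u =>
    (hκd u).inv (hκ0 u)
  have hnd : ∀ u, DifferentiableAt ℝ (nrml γ) u := fun u => by
    rw [hnrml_eq]; exact (hκinv u).smul (hAdiff u)
  have hbd : ∀ u, DifferentiableAt ℝ (binrml γ) u := fun u => by
    rw [hbinrml_eq]
    exact ((hTdiff u).hasDerivAt.cross3' (hnd u).hasDerivAt).differentiableAt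
  -- derivative values at s
  set κs := curv γ s with hκs
  set τs := tors γ s with hτs
  set tv := deriv γ s with htv
  set nv := nrml γ s with hnv
  set bv := binrml γ s with hbv
  set As := deriv (deriv γ) s with hAs
  set A3 := deriv (deriv (deriv γ)) s with hA3
  have κne : κs ≠ 0 := hκ0 s
  set c' := deriv (fun v => (curv γ v)⁻¹) s with hc'def
  have hc' : HasDerivAt (fun v => (curv γ v)⁻¹) c' s := (hκinv s).hasDerivAt
  have hA's : HasDerivAt (deriv (deriv γ)) A3 s := (hAdiff s).hasDerivAt
  set n' := (κs)⁻¹ • A3 + c' • As with hn'def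
  have hn' : HasDerivAt (nrml γ) n' s := by
    rw [hnrml_eq]
    exact hc'.smul hA's
  set b' := cross3 tv n' + cross3 As nv with hb'def
  have hb' : HasDerivAt (binrml γ) b' s := by
    rw [hbinrml_eq]
    exact (hTdiff s).hasDerivAt.cross3' hn'
  have hAn : As = κs • nv := by
    rw [hnv, hnrml_eq]
    rw [smul_smul, mul_inv_cancel₀ κne, one_smul]
  have hNAs : (inner ℝ nv As : ℝ) = κs := by
    rw [hAn, real_inner_smul_right, hNN s]; ring
  have hAB : (inner ℝ As bv : ℝ) = 0 := by
    rw [hAn, real_inner_smul_left, hNB s, mul_zero]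
  -- Frenet scalar identities
  have hn'n : (inner ℝ n' nv : ℝ) = 0 := by
    have h := HasDerivAt.inner ℝ hn' hn'
    simp only [hNN] at h
    have h3 := h.unique (hasDerivAt_const s 1)
    have h4 : (inner ℝ nv n' : ℝ) = inner ℝ n' nv := real_inner_comm _ _
    linarith
  have hn't : (inner ℝ n' tv : ℝ) = -κs := by
    have h := HasDerivAt.inner ℝ hn' (hTdiff s).hasDerivAt
    simp only [hNT] at h
    have h3 := h.unique (hasDerivAt_const s 0)
    have h4 : (inner ℝ nv As : ℝ) = κs := hNAs
    linarith
  have hτ : τs = (κs)⁻¹ * (inner ℝ bv A3 : ℝ) := by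
    rw [hτs, tors]
    have hcr : cross3 (deriv γ s) (deriv (deriv γ) s) = κs • bv := by
      rw [hbv, hbinrml_eq]
      calc cross3 (deriv γ s) (deriv (deriv γ) s) = cross3 tv (κs • nv) := by rw [← hAn, htv]
        _ = κs • cross3 (deriv γ s) (nrml γ s) := by rw [cross3_smul_right, htv]
    rw [hcr, real_inner_smul_left]
    rw [← hκs]
    field_simp
    ring
  have hn'b : (inner ℝ n' bv : ℝ) = τs := by
    rw [hn'def]
    simp only [inner_add_left, real_inner_smul_left]
    have h1 : (inner ℝ As bv : ℝ) = 0 := hAB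
    rw [h1, hτ]
    have : (inner ℝ A3 bv : ℝ) = inner ℝ bv A3 := real_inner_comm _ _
    rw [this]; ring
  have hb'b : (inner ℝ b' bv : ℝ) = 0 := by
    have h := HasDerivAt.inner ℝ hb' hb'
    simp only [hBB] at h
    have h3 := h.unique (hasDerivAt_const s 1)
    have h4 : (inner ℝ bv b' : ℝ) = inner ℝ b' bv := real_inner_comm _ _
    linarith
  have hb't : (inner ℝ b' tv : ℝ) = 0 := by
    have h := HasDerivAt.inner ℝ hb' (hTdiff s).hasDerivAt
    simp only [hBT] at h
    have h3 := h.unique (hasDerivAt_const s 0)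
    have h4 : (inner ℝ bv As : ℝ) = inner ℝ As bv := real_inner_comm _ _
    rw [h4, hAB] at h3
    linarith
  have hb'n : (inner ℝ b' nv : ℝ) = -τs := by
    have h := HasDerivAt.inner ℝ hb' hn'
    simp only [hBN] at h
    have h3 := h.unique (hasDerivAt_const s 0)
    have h4 : (inner ℝ bv n' : ℝ) = inner ℝ n' bv := real_inner_comm _ _
    rw [h4, hn'b] at h3
    linarith
  -- Frenet vector identities
  have hcross_tn : cross3 tv nv = bv := rfl
  have hn'vec : n' = (-κs) • tv + τs • bv := by
    have h := expand3 tv nv n' (hTT s) (hNN s) (hTN s)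
    rw [hcross_tn, hn'n, hn't, hn'b] at h
    rw [← h]; module
  have hb'vec : b' = (-τs) • nv := by
    have h := expand3 tv nv b' (hTT s) (hNN s) (hTN s)
    rw [hcross_tn, hb'n, hb't, hb'b] at h
    rw [← h]; module
  -- the derivative of the tube map
  set P1 : EuclideanSpace ℝ (Fin 3) := tv + (r * Real.cos θ) • n' + (r * Real.sin θ) • b'
    with hP1def
  set P2 : EuclideanSpace ℝ (Fin 3) := (-(r * Real.sin θ)) • nv + (r * Real.cos θ) • bv
    with hP2def
  set L : ℝ × ℝ →L[ℝ] EuclideanSpace ℝ (Fin 3) :=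
    (ContinuousLinearMap.fst ℝ ℝ ℝ).smulRight P1 + (ContinuousLinearMap.snd ℝ ℝ ℝ).smulRight P2
    with hLdef
  have hfst : HasFDerivAt (fun η : ℝ × ℝ => s + η.1) (ContinuousLinearMap.fst ℝ ℝ ℝ) 0 :=
    hasFDerivAt_fst.const_add s
  have hsnd : HasFDerivAt (fun η : ℝ × ℝ => θ + η.2) (ContinuousLinearMap.snd ℝ ℝ ℝ) 0 :=
    hasFDerivAt_snd.const_add θ
  have hγs : HasFDerivAt γ ((1 : ℝ →L[ℝ] ℝ).smulRight tv) (s + (0 : ℝ × ℝ).1) := by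
    simpa [ContinuousLinearMap.smulRight_one_eq_toSpanSingleton] using (hγdiff s).hasDerivAt.hasFDerivAt
  have hns : HasFDerivAt (nrml γ) ((1 : ℝ →L[ℝ] ℝ).smulRight n') (s + (0 : ℝ × ℝ).1) := by
    simpa [ContinuousLinearMap.smulRight_one_eq_toSpanSingleton] using hn'.hasFDerivAt
  have hbs : HasFDerivAt (binrml γ) ((1 : ℝ →L[ℝ] ℝ).smulRight b') (s + (0 : ℝ × ℝ).1) := by
    simpa [ContinuousLinearMap.smulRight_one_eq_toSpanSingleton] using hb'.hasFDerivAt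
  have c1 : HasFDerivAt (fun η : ℝ × ℝ => γ (s + η.1))
      (((1 : ℝ →L[ℝ] ℝ).smulRight tv).comp (ContinuousLinearMap.fst ℝ ℝ ℝ)) 0 := by
    have h := HasFDerivAt.comp (f := fun η : ℝ × ℝ => s + η.1) 0 hγs hfst; exact h
  have c2 : HasFDerivAt (fun η : ℝ × ℝ => nrml γ (s + η.1))
      (((1 : ℝ →L[ℝ] ℝ).smulRight n').comp (ContinuousLinearMap.fst ℝ ℝ ℝ)) 0 := by
    have h := HasFDerivAt.comp (f := fun η : ℝ × ℝ => s + η.1) 0 hns hfst; exact h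
  have c3 : HasFDerivAt (fun η : ℝ × ℝ => binrml γ (s + η.1))
      (((1 : ℝ →L[ℝ] ℝ).smulRight b').comp (ContinuousLinearMap.fst ℝ ℝ ℝ)) 0 := by
    have h := HasFDerivAt.comp (f := fun η : ℝ × ℝ => s + η.1) 0 hbs hfst; exact h
  have hcosd : HasDerivAt (fun x : ℝ => r * Real.cos x)
      (r * -Real.sin (θ + (0 : ℝ × ℝ).2)) (θ + (0 : ℝ × ℝ).2) :=
    (Real.hasDerivAt_cos _).const_mul r
  have hsind : HasDerivAt (fun x : ℝ => r * Real.sin x)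
      (r * Real.cos (θ + (0 : ℝ × ℝ).2)) (θ + (0 : ℝ × ℝ).2) :=
    (Real.hasDerivAt_sin _).const_mul r
  have ccos : HasFDerivAt (fun η : ℝ × ℝ => r * Real.cos (θ + η.2))
      ((r * -Real.sin (θ + (0 : ℝ × ℝ).2)) • ContinuousLinearMap.snd ℝ ℝ ℝ) 0 := by
    have h := HasDerivAt.comp_hasFDerivAt (f := fun η : ℝ × ℝ => θ + η.2) 0 hcosd hsnd; exact h
  have csin : HasFDerivAt (fun η : ℝ × ℝ => r * Real.sin (θ + η.2))
      ((r * Real.cos (θ + (0 : ℝ × ℝ).2)) • ContinuousLinearMap.snd ℝ ℝ ℝ) 0 := by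
    have h := HasDerivAt.comp_hasFDerivAt (f := fun η : ℝ × ℝ => θ + η.2) 0 hsind hsnd; exact h
  have term2 := ccos.smul c2
  have term3 := csin.smul c3
  have hFbig := (c1.add term2).add term3
  have hF : HasFDerivAt (fun η : ℝ × ℝ => tubeMap γ r (s + η.1) (θ + η.2)) L 0 := by
    refine hFbig.congr_fderiv ?_
    refine ContinuousLinearMap.ext fun η => ?_
    simp only [ContinuousLinearMap.add_apply, ContinuousLinearMap.comp_apply,
      ContinuousLinearMap.smulRight_apply, ContinuousLinearMap.one_apply,
      ContinuousLinearMap.smul_apply, ContinuousLinearMap.coe_fst', ContinuousLinearMap.coe_snd',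
      Prod.fst_zero, Prod.snd_zero, add_zero, hLdef, hP1def, hP2def]
    match_scalars <;> (try simp only [smul_eq_mul]) <;> ring
  -- value of L and its norm
  have hLval : ∀ η : ℝ × ℝ, L η = (η.1 * (1 - r * κs * Real.cos θ)) • tv +
      (-(r * Real.sin θ) * (η.2 + η.1 * τs)) • nv + ((r * Real.cos θ) * (η.2 + η.1 * τs)) • bv := by
    intro η
    simp only [hLdef, ContinuousLinearMap.add_apply, ContinuousLinearMap.smulRight_apply,
      ContinuousLinearMap.coe_fst', ContinuousLinearMap.coe_snd', hP1def, hP2def]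
    rw [hn'vec, hb'vec]
    match_scalars <;> ring
  have hQ : ∀ η : ℝ × ℝ, ‖L η‖ ^ 2
      = η.1 ^ 2 * (1 - r * κs * Real.cos θ) ^ 2 + r ^ 2 * (η.2 + η.1 * τs) ^ 2 := by
    intro η
    rw [hLval η, normsq3 tv nv bv _ _ _ (hTT s) (hNN s) (hBB s) (hTN s) (hTB s) (hNB s)]
    linear_combination (r ^ 2 * (η.2 + η.1 * τs) ^ 2) * Real.sin_sq_add_cos_sq θ
  -- little-o argument
  have hg : (fun η : ℝ × ℝ => tubeMap γ r (s + η.1) (θ + η.2) - tubeMap γ r s θ - L η)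
      =o[nhds (0 : ℝ × ℝ)] (fun η : ℝ × ℝ => η) := by
    have h := hF.isLittleO
    simp only [sub_zero, Prod.fst_zero, Prod.snd_zero, add_zero] at h
    exact h
  set G : ℝ × ℝ → EuclideanSpace ℝ (Fin 3) :=
    fun η => tubeMap γ r (s + η.1) (θ + η.2) - tubeMap γ r s θ - L η with hGdef
  have key : ∀ η : ℝ × ℝ, ‖tubeMap γ r (s + η.1) (θ + η.2) - tubeMap γ r s θ‖ ^ 2 -
      (η.1 ^ 2 * (1 - r * κs * Real.cos θ) ^ 2 + r ^ 2 * (η.2 + η.1 * τs) ^ 2)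
      = (inner ℝ (G η) (G η) : ℝ) + 2 * (inner ℝ (G η) (L η) : ℝ) := by
    intro η
    have hsplit : tubeMap γ r (s + η.1) (θ + η.2) - tubeMap γ r s θ = G η + L η := by
      rw [hGdef]; exact (sub_add_cancel _ _).symm
    rw [hsplit, norm_add_sq_real (G η) (L η), ← hQ η, real_inner_self_eq_norm_sq]
    ring
  have hGnorm : (fun η : ℝ × ℝ => ‖G η‖) =o[nhds (0 : ℝ × ℝ)] fun η : ℝ × ℝ => ‖η‖ :=
    hg.norm_norm
  have hGO : (fun η : ℝ × ℝ => ‖G η‖) =O[nhds (0 : ℝ × ℝ)] fun η : ℝ × ℝ => ‖η‖ :=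
    hGnorm.isBigO
  have hsq : (fun η : ℝ × ℝ => ‖η‖ * ‖η‖) =O[nhds (0 : ℝ × ℝ)]
      fun η : ℝ × ℝ => η.1 ^ 2 + η.2 ^ 2 := by
    refine Asymptotics.IsBigO.of_bound 1 (Filter.Eventually.of_forall fun η => ?_)
    have h1 : ‖η‖ = max ‖η.1‖ ‖η.2‖ := rfl
    have h2 : ‖η‖ * ‖η‖ ≤ η.1 ^ 2 + η.2 ^ 2 := by
      rcases max_cases ‖η.1‖ ‖η.2‖ with ⟨he, -⟩ | ⟨he, -⟩ <;>
        · rw [h1, he, Real.norm_eq_abs]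
          nlinarith [sq_abs η.1, sq_abs η.2, sq_nonneg η.1, sq_nonneg η.2]
    have h3 : 0 ≤ ‖η‖ * ‖η‖ := mul_nonneg (norm_nonneg _) (norm_nonneg _)
    rw [Real.norm_eq_abs, Real.norm_eq_abs, abs_of_nonneg h3, one_mul]
    exact h2.trans (le_abs_self _)
  have h1 : (fun η : ℝ × ℝ => (inner ℝ (G η) (G η) : ℝ)) =o[nhds (0 : ℝ × ℝ)]
      fun η : ℝ × ℝ => η.1 ^ 2 + η.2 ^ 2 := by
    have hO : (fun η : ℝ × ℝ => (inner ℝ (G η) (G η) : ℝ)) =O[nhds (0 : ℝ × ℝ)]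
        fun η => ‖G η‖ * ‖G η‖ := by
      refine Asymptotics.IsBigO.of_bound 1 (Filter.Eventually.of_forall fun η => ?_)
      rw [Real.norm_eq_abs, Real.norm_eq_abs, one_mul]
      exact (abs_real_inner_le_norm _ _).trans (le_abs_self _)
    exact hO.trans_isLittleO ((hGnorm.mul_isBigO hGO).trans_isBigO hsq)
  have h2 : (fun η : ℝ × ℝ => (inner ℝ (G η) (L η) : ℝ)) =o[nhds (0 : ℝ × ℝ)]
      fun η : ℝ × ℝ => η.1 ^ 2 + η.2 ^ 2 := by
    have hO : (fun η : ℝ × ℝ => (inner ℝ (G η) (L η) : ℝ)) =O[nhds (0 : ℝ × ℝ)]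
        fun η => ‖G η‖ * ‖η‖ := by
      refine Asymptotics.IsBigO.of_bound ‖L‖ (Filter.Eventually.of_forall fun η => ?_)
      rw [Real.norm_eq_abs, Real.norm_eq_abs]
      have hb1 : |(inner ℝ (G η) (L η) : ℝ)| ≤ ‖G η‖ * ‖L η‖ := abs_real_inner_le_norm _ _
      have hb2 : ‖L η‖ ≤ ‖L‖ * ‖η‖ := L.le_opNorm η
      have hb3 : ‖G η‖ * ‖L η‖ ≤ ‖L‖ * (‖G η‖ * ‖η‖) := by
        have := mul_le_mul_of_nonneg_left hb2 (norm_nonneg (G η))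
        nlinarith [norm_nonneg (G η)]
      refine hb1.trans (hb3.trans ?_)
      have : (0:ℝ) ≤ ‖G η‖ * ‖η‖ := mul_nonneg (norm_nonneg _) (norm_nonneg _)
      rw [abs_of_nonneg this]
    have hmid : (fun η : ℝ × ℝ => ‖G η‖ * ‖η‖) =o[nhds (0 : ℝ × ℝ)]
        fun η : ℝ × ℝ => ‖η‖ * ‖η‖ :=
      hGnorm.mul_isBigO (Asymptotics.isBigO_refl _ _)
    exact hO.trans_isLittleO (hmid.trans_isBigO hsq)
  have hfinal := h1.add (h2.const_mul_left 2)
  have hfun : (fun η : ℝ × ℝ =>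
      ‖tubeMap γ r (s + η.1) (θ + η.2) - tubeMap γ r s θ‖ ^ 2 -
        (η.1 ^ 2 * (1 - r * κs * Real.cos θ) ^ 2 + r ^ 2 * (η.2 + η.1 * τs) ^ 2))
      = fun η : ℝ × ℝ => (inner ℝ (G η) (G η) : ℝ) + 2 * (inner ℝ (G η) (L η) : ℝ) :=
    funext key
  rw [hfun]
  exact hfinal
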